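/- arXiv:1705.06162 — 9 statements merged into one kernel-verified Lean document; each statement's English description precedes it below -/
import Mathlib

section
/- Let p, q, r, a, ν be real numbers with q ≠ 0, and suppose that 4 ν r a² − p a + ν = 0 and A = −12 ν r a / q. Then the function U(ξ) = A · sech²(ξ) satisfies (p a − ν) U(ξ) + (q a / 2) U(ξ)² − ν r a² U″(ξ) = 0 for all ξ ∈ ℝ. -/
open Real

lemma sech_sq_hasDerivAt (A ξ : ℝ) :
    HasDerivAt (fun ξ : ℝ => A * (1 / Real.cosh ξ) ^ 2)
      (A * (-2 * Real.sinh ξ / Real.cosh ξ ^ 3)) ξ := by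
  have hc : Real.cosh ξ ≠ 0 := (Real.cosh_pos ξ).ne'
  have h := (((Real.hasDerivAt_cosh ξ).inv hc).pow 2).const_mul A
  convert h using 1
  · rfl
  · rfl
  · funext y; simp [one_div, Pi.pow_apply, Pi.inv_apply]
  · show A * (-2 * Real.sinh ξ / Real.cosh ξ ^ 3) = A * (((2:ℕ):ℝ) * (Real.cosh ξ)⁻¹ ^ (2 - 1) * (-Real.sinh ξ / Real.cosh ξ ^ 2))
    simp only [Nat.cast_ofNat, pow_one]
    ring

lemma sech_sq_deriv2 (A ξ : ℝ) :
    deriv (deriv (fun ξ : ℝ => A * (1 / Real.cosh ξ) ^ 2)) ξ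
      = A * (-2 * (Real.cosh ξ ^ 2 - 3 * Real.sinh ξ ^ 2) / Real.cosh ξ ^ 4) := by
  have h1 : deriv (fun ξ : ℝ => A * (1 / Real.cosh ξ) ^ 2)
      = fun ξ => A * (-2 * Real.sinh ξ / Real.cosh ξ ^ 3) := by
    funext x; exact (sech_sq_hasDerivAt A x).deriv
  rw [h1]
  have hc : Real.cosh ξ ≠ 0 := (Real.cosh_pos ξ).ne'
  have hnum : HasDerivAt (fun x : ℝ => -2 * Real.sinh x) (-2 * Real.cosh ξ) ξ :=
    (Real.hasDerivAt_sinh ξ).const_mul (-2)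
  have hden : HasDerivAt (fun x : ℝ => Real.cosh x ^ 3) (3 * Real.cosh ξ ^ 2 * Real.sinh ξ) ξ := by
    have h := (Real.hasDerivAt_cosh ξ).pow 3; simp at h; exact h
  have hc3 : Real.cosh ξ ^ 3 ≠ 0 := pow_ne_zero _ hc
  have h := ((hnum.div hden hc3).const_mul A).deriv
  rw [show (fun ξ : ℝ => A * (-2 * Real.sinh ξ / Real.cosh ξ ^ 3)) = (fun y : ℝ => A * ((fun x : ℝ => -2 * Real.sinh x) / fun x : ℝ => Real.cosh x ^ 3) y) from rfl, h]
  field_simp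
  ring

/-- If `4 ν r a² - p a + ν = 0` and `A = -12 ν r a / q` (with `q ≠ 0`), then
`U(ξ) = A sech²(ξ)` solves the once-integrated RLW traveling wave equation
`(p a - ν) U + (q a / 2) U² - ν r a² U'' = 0` for all `ξ`. -/
theorem rlw_sech_solution
    (p q r a ν A : ℝ) (hq : q ≠ 0)
    (h1 : 4 * ν * r * a ^ 2 - p * a + ν = 0)
    (hA : A = -12 * ν * r * a / q) :
    ∀ ξ : ℝ,
      (p * a - ν) * (A * (1 / Real.cosh ξ) ^ 2)
      + q * a / 2 * (A * (1 / Real.cosh ξ) ^ 2) ^ 2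
      - ν * r * a ^ 2 * deriv (deriv (fun ξ : ℝ => A * (1 / Real.cosh ξ) ^ 2)) ξ = 0 := by
  intro ξ
  rw [sech_sq_deriv2]
  have hc : Real.cosh ξ ≠ 0 := (Real.cosh_pos ξ).ne'
  have hpa : p * a - ν = 4 * ν * r * a ^ 2 := by linarith
  have hs : Real.sinh ξ ^ 2 = Real.cosh ξ ^ 2 - 1 := Real.sinh_sq ξ
  subst hA
  rw [hpa, hs]
  field_simp
  ring
end

section
/- Let p, q, r, a, ν be real numbers with q ≠ 0, and suppose that 4 ν r a² − p a + ν = 0 and A = 12 ν r a / q. Then the function U(ξ) = A · csch²(ξ) satisfies (p a − ν) U(ξ) + (q a / 2) U(ξ)² − ν r a² U″(ξ) = 0 for all ξ ≠ 0. -/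
open Real

lemma csch_deriv1 (A : ℝ) {x : ℝ} (hx : Real.sinh x ≠ 0) :
    HasDerivAt (fun ξ : ℝ => A * (1 / Real.sinh ξ) ^ 2)
      (-2 * A * Real.cosh x / Real.sinh x ^ 3) x := by
  have h := (((Real.hasDerivAt_sinh x).fun_pow 2).fun_inv (pow_ne_zero 2 hx)).const_mul A
  simp only [one_div, inv_pow]
  refine h.congr_deriv ?_
  field_simp
  ring

lemma csch_deriv2 (A : ℝ) {x : ℝ} (hx : Real.sinh x ≠ 0) :
    HasDerivAt (fun x : ℝ => -2 * A * Real.cosh x / Real.sinh x ^ 3)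
      ((-2 * A * Real.sinh x * Real.sinh x ^ 3
        - (-2 * A * Real.cosh x) * (3 * Real.sinh x ^ 2 * Real.cosh x))
        / (Real.sinh x ^ 3) ^ 2) x := by
  have hf := (Real.hasDerivAt_cosh x).const_mul (-2 * A)
  have hg := (Real.hasDerivAt_sinh x).fun_pow 3
  have h := hf.fun_div hg (pow_ne_zero 3 hx)
  refine h.congr_deriv ?_
  norm_num

/-- If `4 ν r a² - p a + ν = 0` and `A = 12 ν r a / q` (with `q ≠ 0`), then
`U(ξ) = A csch²(ξ)` solves the once-integrated RLW traveling wave equation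
`(p a - ν) U + (q a / 2) U² - ν r a² U'' = 0` for all `ξ ≠ 0`. -/
theorem rlw_csch_solution
    (p q r a ν A : ℝ) (hq : q ≠ 0)
    (h1 : 4 * ν * r * a ^ 2 - p * a + ν = 0)
    (hA : A = 12 * ν * r * a / q) :
    ∀ ξ : ℝ, ξ ≠ 0 →
      (p * a - ν) * (A * (1 / Real.sinh ξ) ^ 2)
      + q * a / 2 * (A * (1 / Real.sinh ξ) ^ 2) ^ 2
      - ν * r * a ^ 2 * deriv (deriv (fun ξ : ℝ => A * (1 / Real.sinh ξ) ^ 2)) ξ = 0 := by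
  intro ξ hξ
  have hs : Real.sinh ξ ≠ 0 := fun h => hξ (Real.sinh_eq_zero.mp h)
  have hopen : IsOpen {x : ℝ | Real.sinh x ≠ 0} :=
    isOpen_compl_singleton.preimage Real.continuous_sinh
  have hev : deriv (fun ξ : ℝ => A * (1 / Real.sinh ξ) ^ 2)
      =ᶠ[nhds ξ] fun x => -2 * A * Real.cosh x / Real.sinh x ^ 3 := by
    filter_upwards [hopen.mem_nhds hs] with y hy
    exact (csch_deriv1 A hy).deriv
  have hD : deriv (deriv (fun ξ : ℝ => A * (1 / Real.sinh ξ) ^ 2)) ξ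
      = (-2 * A * Real.sinh ξ * Real.sinh ξ ^ 3
        - (-2 * A * Real.cosh ξ) * (3 * Real.sinh ξ ^ 2 * Real.cosh ξ))
        / (Real.sinh ξ ^ 3) ^ 2 := by
    rw [hev.deriv_eq]
    exact (csch_deriv2 A hs).deriv
  rw [hD, hA]
  have hc : Real.cosh ξ ^ 2 = 1 + Real.sinh ξ ^ 2 := Real.cosh_sq' ξ
  have key : (p * a - ν) * Real.sinh ξ ^ 2 + a * (12 * ν * r * a) / 2
      + ν * r * a ^ 2 * (2 * Real.sinh ξ ^ 2 - 6 * Real.cosh ξ ^ 2) = 0 := by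
    linear_combination (-Real.sinh ξ ^ 2) * h1 + (-6 * ν * r * a ^ 2) * hc
  have hrw : (p * a - ν) * (12 * ν * r * a / q * (1 / Real.sinh ξ) ^ 2)
      + q * a / 2 * (12 * ν * r * a / q * (1 / Real.sinh ξ) ^ 2) ^ 2
      - ν * r * a ^ 2 * ((-2 * (12 * ν * r * a / q) * Real.sinh ξ * Real.sinh ξ ^ 3
        - -2 * (12 * ν * r * a / q) * Real.cosh ξ * (3 * Real.sinh ξ ^ 2 * Real.cosh ξ))
        / (Real.sinh ξ ^ 3) ^ 2)
      = (12 * ν * r * a / (q * Real.sinh ξ ^ 4)) *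
        ((p * a - ν) * Real.sinh ξ ^ 2 + a * (12 * ν * r * a) / 2
          + ν * r * a ^ 2 * (2 * Real.sinh ξ ^ 2 - 6 * Real.cosh ξ ^ 2)) := by
    field_simp
    ring
  rw [hrw, key, mul_zero]
end

section
/- Let α ∈ (0,1], let p, q, r, ν be real numbers with ν ≠ 0, q ≠ 0, r < 0, and let ε ∈ {1, −1}. Set s = √(p² − 16 ν² r), a = (p + ε s)/(8 ν r), and A = −(3/2)(p + ε s)/q. Then the function u(x,t) = A · sech²(a x − (ν/α) t^α) satisfies the conformable time fractional RLW equation t^{1−α} ∂u/∂t + p ∂u/∂x + q u ∂u/∂x + r · t^{1−α} ∂/∂t(∂²u/∂x²) = 0 for all x ∈ ℝ and all t > 0. -/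
private lemma cosh_ne (x : ℝ) : Real.cosh x ≠ 0 := (Real.cosh_pos x).ne'

private lemma hG0 (ξ : ℝ) :
    HasDerivAt (fun z : ℝ => (1 / Real.cosh z) ^ 2)
      (-2 * Real.sinh ξ / Real.cosh ξ ^ 3) ξ := by
  have hfun : (fun z : ℝ => (1 / Real.cosh z) ^ 2) = fun z => ((Real.cosh z)⁻¹) ^ 2 := by
    funext z; rw [one_div]
  rw [hfun]
  have h := ((Real.hasDerivAt_cosh ξ).inv (cosh_ne ξ)).pow 2
  refine h.congr_deriv ?_
  have hc := cosh_ne ξ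
  simp only [Pi.inv_apply, Pi.pow_apply, show (2:ℕ) - 1 = 1 from rfl, pow_one, Nat.cast_ofNat]
  field_simp

private lemma hG1 (ξ : ℝ) :
    HasDerivAt (fun z : ℝ => -2 * Real.sinh z / Real.cosh z ^ 3)
      (4 / Real.cosh ξ ^ 2 - 6 / Real.cosh ξ ^ 4) ξ := by
  have h := (((Real.hasDerivAt_sinh ξ).const_mul (-2)).div
      ((Real.hasDerivAt_cosh ξ).pow 3) (pow_ne_zero 3 (cosh_ne ξ)))
  refine h.congr_deriv ?_
  have hc := cosh_ne ξ
  have hsq : Real.sinh ξ ^ 2 = Real.cosh ξ ^ 2 - 1 := by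
    nlinarith [Real.cosh_sq_sub_sinh_sq ξ]
  simp only [Pi.pow_apply, show (3:ℕ) - 1 = 2 from rfl, Nat.cast_ofNat]
  field_simp
  linear_combination 6 * hsq

private lemma hG2 (ξ : ℝ) :
    HasDerivAt (fun z : ℝ => 4 / Real.cosh z ^ 2 - 6 / Real.cosh z ^ 4)
      (-8 * Real.sinh ξ / Real.cosh ξ ^ 3 + 24 * Real.sinh ξ / Real.cosh ξ ^ 5) ξ := by
  have hfun : (fun z : ℝ => 4 / Real.cosh z ^ 2 - 6 / Real.cosh z ^ 4)
      = fun z => 4 * (Real.cosh z ^ 2)⁻¹ - 6 * (Real.cosh z ^ 4)⁻¹ := by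
    funext z; rw [div_eq_mul_inv, div_eq_mul_inv]
  rw [hfun]
  have h1 := (((Real.hasDerivAt_cosh ξ).pow 2).inv (pow_ne_zero 2 (cosh_ne ξ))).const_mul (4:ℝ)
  have h2 := (((Real.hasDerivAt_cosh ξ).pow 4).inv (pow_ne_zero 4 (cosh_ne ξ))).const_mul (6:ℝ)
  have h := h1.sub h2
  refine h.congr_deriv ?_
  have hc := cosh_ne ξ
  simp only [Pi.inv_apply, Pi.pow_apply]
  field_simp
  ring

private lemma hlin (a k y : ℝ) : HasDerivAt (fun z : ℝ => a * z - k) a y := by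
  simpa using ((hasDerivAt_id y).const_mul a).sub_const k

private lemma Dx1 (A a k : ℝ) :
    deriv (fun y : ℝ => A * (1 / Real.cosh (a * y - k)) ^ 2)
    = fun y : ℝ => A * a *
        (-2 * Real.sinh (a * y - k) / Real.cosh (a * y - k) ^ 3) := by
  funext y
  have h := ((hG0 (a * y - k)).comp y (hlin a k y)).const_mul A
  have h' : HasDerivAt (fun y : ℝ => A * (1 / Real.cosh (a * y - k)) ^ 2)
      (A * (-2 * Real.sinh (a * y - k) / Real.cosh (a * y - k) ^ 3 * a)) y := by
    simpa [Function.comp] using h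
  rw [h'.deriv]; ring

private lemma Dx2 (A a k x : ℝ) :
    deriv (fun y : ℝ => A * a *
        (-2 * Real.sinh (a * y - k) / Real.cosh (a * y - k) ^ 3)) x
    = A * a ^ 2 * (4 / Real.cosh (a * x - k) ^ 2 - 6 / Real.cosh (a * x - k) ^ 4) := by
  have h := ((hG1 (a * x - k)).comp x (hlin a k x)).const_mul (A * a)
  have h' : HasDerivAt (fun y : ℝ => A * a *
      (-2 * Real.sinh (a * y - k) / Real.cosh (a * y - k) ^ 3))
      (A * a * ((4 / Real.cosh (a * x - k) ^ 2 - 6 / Real.cosh (a * x - k) ^ 4) * a)) x := by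
    simpa [Function.comp] using h
  rw [h'.deriv]; ring

private lemma Dxx (A a k x : ℝ) :
    deriv (deriv (fun y : ℝ => A * (1 / Real.cosh (a * y - k)) ^ 2)) x
    = A * a ^ 2 * (4 / Real.cosh (a * x - k) ^ 2 - 6 / Real.cosh (a * x - k) ^ 4) := by
  rw [Dx1, Dx2]

/-- The sech²-type traveling wave solutions of the conformable time fractional RLW
equation `t^(1-α) u_t + p u_x + q u u_x + r t^(1-α) ∂_t (u_xx) = 0`. -/
theorem rlw_sech_pde_solution
    (α p q r ν ε : ℝ) (hα : α ∈ Set.Ioc (0 : ℝ) 1)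
    (hν : ν ≠ 0) (hq : q ≠ 0) (hr : r < 0) (hε : ε = 1 ∨ ε = -1)
    (s a A : ℝ)
    (hs : s = Real.sqrt (p ^ 2 - 16 * ν ^ 2 * r))
    (ha : a = (p + ε * s) / (8 * ν * r))
    (hA : A = -(3 / 2) * (p + ε * s) / q) :
    ∀ x t : ℝ, 0 < t →
      t ^ (1 - α) *
        deriv (fun τ : ℝ => A * (1 / Real.cosh (a * x - ν / α * τ ^ α)) ^ 2) t
      + p * deriv (fun y : ℝ => A * (1 / Real.cosh (a * y - ν / α * t ^ α)) ^ 2) x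
      + q * (A * (1 / Real.cosh (a * x - ν / α * t ^ α)) ^ 2)
          * deriv (fun y : ℝ => A * (1 / Real.cosh (a * y - ν / α * t ^ α)) ^ 2) x
      + r * t ^ (1 - α) *
          deriv (fun τ : ℝ =>
            deriv (deriv
              (fun y : ℝ => A * (1 / Real.cosh (a * y - ν / α * τ ^ α)) ^ 2)) x) t = 0 := by
  intro x t ht
  have hα0 : α ≠ 0 := ne_of_gt hα.1
  have hrne : r ≠ 0 := ne_of_lt hr
  -- algebraic identities
  have hε2 : ε ^ 2 = 1 := by rcases hε with h | h <;> rw [h] <;> norm_num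
  have hs2 : s ^ 2 = p ^ 2 - 16 * ν ^ 2 * r := by
    rw [hs]
    exact Real.sq_sqrt (by nlinarith [sq_nonneg p, sq_nonneg ν])
  have ha8 : a * (8 * ν * r) = p + ε * s := by
    rw [ha]; field_simp
  have key : (p + ε * s) * (ε * s - p) = -16 * ν ^ 2 * r := by
    linear_combination s ^ 2 * hε2 + hs2
  have h1 : ν - p * a + 4 * r * ν * a ^ 2 = 0 := by
    have hinv : (16 * ν * r) * (16 * ν * r)⁻¹ = 1 :=
      mul_inv_cancel₀ (by simp [hν, hrne])
    linear_combination (a / 2 + (ε * s - p) * (16 * ν * r)⁻¹) * ha8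
      + (16 * ν * r)⁻¹ * key + (p * a / 2 - a * ε * s / 2 - ν) * hinv
  have hqA : q * A = -(3 / 2) * (p + ε * s) := by
    rw [hA]; field_simp
  have h2 : q * A * a + 12 * r * ν * a ^ 2 = 0 := by
    linear_combination a * hqA + (3 / 2) * a * ha8
  -- the time derivative of the inner phase
  have hτ : HasDerivAt (fun τ : ℝ => a * x - ν / α * τ ^ α) (-(ν * t ^ (α - 1))) t := by
    have hp := Real.hasDerivAt_rpow_const (x := t) (p := α) (Or.inl ht.ne')
    have h := (hp.const_mul (ν / α)).const_sub (a * x)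
    have heq : -(ν / α * (α * t ^ (α - 1))) = -(ν * t ^ (α - 1)) := by
      field_simp
    rw [heq] at h
    exact h
  set ξ : ℝ := a * x - ν / α * t ^ α with hξ
  set S : ℝ := Real.cosh ξ with hS
  set T : ℝ := Real.sinh ξ with hT
  -- time derivative of u
  have hDt : deriv (fun τ : ℝ => A * (1 / Real.cosh (a * x - ν / α * τ ^ α)) ^ 2) t
      = A * (-2 * T / S ^ 3 * -(ν * t ^ (α - 1))) := by
    have h := ((hG0 ξ).comp t hτ).const_mul A
    have h' : HasDerivAt (fun τ : ℝ => A * (1 / Real.cosh (a * x - ν / α * τ ^ α)) ^ 2)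
        (A * (-2 * T / S ^ 3 * -(ν * t ^ (α - 1)))) t := by
      simpa [Function.comp, hξ, hS, hT] using h
    exact h'.deriv
  -- space derivative of u
  have hDx : deriv (fun y : ℝ => A * (1 / Real.cosh (a * y - ν / α * t ^ α)) ^ 2) x
      = A * a * (-2 * T / S ^ 3) := by
    rw [Dx1]
  -- time derivative of u_xx
  have hDt2 : deriv (fun τ : ℝ =>
      deriv (deriv (fun y : ℝ => A * (1 / Real.cosh (a * y - ν / α * τ ^ α)) ^ 2)) x) t
      = A * a ^ 2 * ((-8 * T / S ^ 3 + 24 * T / S ^ 5) * -(ν * t ^ (α - 1))) := by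
    have hfun : (fun τ : ℝ =>
        deriv (deriv (fun y : ℝ => A * (1 / Real.cosh (a * y - ν / α * τ ^ α)) ^ 2)) x)
        = fun τ : ℝ => A * a ^ 2 * (4 / Real.cosh (a * x - ν / α * τ ^ α) ^ 2
            - 6 / Real.cosh (a * x - ν / α * τ ^ α) ^ 4) := by
      funext τ
      exact Dxx A a (ν / α * τ ^ α) x
    rw [hfun]
    have h := ((hG2 ξ).comp t hτ).const_mul (A * a ^ 2)
    have h' : HasDerivAt (fun τ : ℝ => A * a ^ 2 * (4 / Real.cosh (a * x - ν / α * τ ^ α) ^ 2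
          - 6 / Real.cosh (a * x - ν / α * τ ^ α) ^ 4))
        (A * a ^ 2 * ((-8 * T / S ^ 3 + 24 * T / S ^ 5) * -(ν * t ^ (α - 1)))) t := by
      simpa [Function.comp, hξ, hS, hT] using h
    exact h'.deriv
  rw [hDt, hDx, hDt2]
  have hpow : t ^ (1 - α) * t ^ (α - 1) = 1 := by
    rw [← Real.rpow_add ht, show (1 - α) + (α - 1) = 0 by ring, Real.rpow_zero]
  linear_combination (2 * A * T / S ^ 3) * h1 - (2 * A * T / S ^ 5) * h2
    + (2 * A * ν * T / S ^ 3 + r * A * a ^ 2 * ν * (8 * T / S ^ 3 - 24 * T / S ^ 5)) * hpow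
end

section
/- Let α ∈ (0,1], let p, q, r, ν be real numbers with ν ≠ 0, q ≠ 0, r < 0, and let ε ∈ {1, −1}. Set s = √(p² − 16 ν² r), a = (p + ε s)/(8 ν r), and A = (3/2)(p + ε s)/q. Then the function u(x,t) = A · csch²(a x − (ν/α) t^α) satisfies the conformable time fractional RLW equation t^{1−α} ∂u/∂t + p ∂u/∂x + q u ∂u/∂x + r · t^{1−α} ∂/∂t(∂²u/∂x²) = 0 at every point (x,t) with t > 0 and a x − (ν/α) t^α ≠ 0. -/
open Real Filter

/-- `sinh z ≠ 0` when `z ≠ 0`. -/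
lemma sinh_ne_zero_of_ne_zero {z : ℝ} (hz : z ≠ 0) : Real.sinh z ≠ 0 := by
  simp [Real.sinh_eq_zero, hz]

/-- derivative of `A * csch² z` -/
lemma gderiv (A : ℝ) {z : ℝ} (hS : Real.sinh z ≠ 0) :
    HasDerivAt (fun z => A * (1 / Real.sinh z) ^ 2)
      (-2 * A * Real.cosh z / Real.sinh z ^ 3) z := by
  have h := (((Real.hasDerivAt_sinh z).inv hS).pow 2).const_mul A
  have hf : (fun z => A * (1 / Real.sinh z) ^ 2) = fun z => A * ((Real.sinh z)⁻¹) ^ 2 := by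
    funext w; rw [one_div]
  rw [hf]
  refine h.congr_deriv ?_
  simp only [Pi.pow_apply, Pi.inv_apply, Nat.reduceSub, pow_one]
  field_simp
  ring

/-- derivative of `-2A cosh z / sinh z ^ 3` -/
lemma g2deriv (A : ℝ) {z : ℝ} (hS : Real.sinh z ≠ 0) :
    HasDerivAt (fun z => -2 * A * Real.cosh z / Real.sinh z ^ 3)
      (A * (4 / Real.sinh z ^ 2 + 6 / Real.sinh z ^ 4)) z := by
  have h := (((Real.hasDerivAt_cosh z).const_mul (-2*A)).div
      ((Real.hasDerivAt_sinh z).pow 3) (pow_ne_zero 3 hS))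
  have hc : Real.cosh z ^ 2 = 1 + Real.sinh z ^ 2 := by
    have := Real.cosh_sq z; linarith
  refine h.congr_deriv ?_
  simp only [Pi.pow_apply]
  field_simp
  linear_combination (6*A*Real.sinh z^2) * hc

/-- derivative of `4/sinh² + 6/sinh⁴` -/
lemma g3deriv {z : ℝ} (hS : Real.sinh z ≠ 0) :
    HasDerivAt (fun z => 4 / Real.sinh z ^ 2 + 6 / Real.sinh z ^ 4)
      (-8 * Real.cosh z / Real.sinh z ^ 3 - 24 * Real.cosh z / Real.sinh z ^ 5) z := by
  have h2 := (hasDerivAt_const z (4:ℝ)).div ((Real.hasDerivAt_sinh z).pow 2) (pow_ne_zero 2 hS)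
  have h4 := (hasDerivAt_const z (6:ℝ)).div ((Real.hasDerivAt_sinh z).pow 4) (pow_ne_zero 4 hS)
  refine (h2.add h4).congr_deriv ?_
  simp only [Pi.pow_apply]
  field_simp
  ring

/-- the second space derivative of the profile -/
lemma dd (A a w x : ℝ) (hx : a * x - w ≠ 0) :
    deriv (deriv (fun y : ℝ => A * (1 / Real.sinh (a * y - w)) ^ 2)) x
      = a ^ 2 * A * (4 / Real.sinh (a * x - w) ^ 2 + 6 / Real.sinh (a * x - w) ^ 4) := by
  have hlin : ∀ y : ℝ, HasDerivAt (fun y : ℝ => a * y - w) a y := fun y => by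
    simpa using ((hasDerivAt_id y).const_mul a).sub_const w
  have hev : ∀ᶠ y in nhds x, a * y - w ≠ 0 := by
    have hc : ContinuousAt (fun y : ℝ => a * y - w) x := by fun_prop
    exact hc.eventually_ne hx
  have h1 : deriv (fun y : ℝ => A * (1 / Real.sinh (a * y - w)) ^ 2)
      =ᶠ[nhds x] fun y => (-2 * A * Real.cosh (a*y-w) / Real.sinh (a*y-w) ^ 3) * a := by
    filter_upwards [hev] with y hy
    exact ((gderiv A (sinh_ne_zero_of_ne_zero hy)).comp y (hlin y)).deriv
  rw [h1.deriv_eq]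
  have h2 : HasDerivAt
      (fun y : ℝ => (-2 * A * Real.cosh (a*y-w) / Real.sinh (a*y-w) ^ 3) * a)
      (((A * (4 / Real.sinh (a*x-w) ^ 2 + 6 / Real.sinh (a*x-w) ^ 4)) * a) * a) x :=
    (((g2deriv A (sinh_ne_zero_of_ne_zero hx)).comp x (hlin x)).mul_const a :)
  rw [h2.deriv]
  ring

/-- The csch²-type traveling wave solutions of the conformable time fractional RLW
equation `t^(1-α) u_t + p u_x + q u u_x + r t^(1-α) ∂_t (u_xx) = 0`, valid where the
wave variable is nonzero. -/
theorem rlw_csch_pde_solution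
    (α p q r ν ε : ℝ) (hα : α ∈ Set.Ioc (0 : ℝ) 1)
    (hν : ν ≠ 0) (hq : q ≠ 0) (hr : r < 0) (hε : ε = 1 ∨ ε = -1)
    (s a A : ℝ)
    (hs : s = Real.sqrt (p ^ 2 - 16 * ν ^ 2 * r))
    (ha : a = (p + ε * s) / (8 * ν * r))
    (hA : A = (3 / 2) * (p + ε * s) / q) :
    ∀ x t : ℝ, 0 < t → a * x - ν / α * t ^ α ≠ 0 →
      t ^ (1 - α) *
        deriv (fun τ : ℝ => A * (1 / Real.sinh (a * x - ν / α * τ ^ α)) ^ 2) t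
      + p * deriv (fun y : ℝ => A * (1 / Real.sinh (a * y - ν / α * t ^ α)) ^ 2) x
      + q * (A * (1 / Real.sinh (a * x - ν / α * t ^ α)) ^ 2)
          * deriv (fun y : ℝ => A * (1 / Real.sinh (a * y - ν / α * t ^ α)) ^ 2) x
      + r * t ^ (1 - α) *
          deriv (fun τ : ℝ =>
            deriv (deriv
              (fun y : ℝ => A * (1 / Real.sinh (a * y - ν / α * τ ^ α)) ^ 2)) x) t = 0 := by
  intro x t ht hξ
  have hα0 : α ≠ 0 := ne_of_gt hα.1
  -- algebraic identities
  have hνr : ν * r ≠ 0 := mul_ne_zero hν hr.ne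
  have hargs : 0 ≤ p ^ 2 - 16 * ν ^ 2 * r := by
    nlinarith [sq_nonneg p, mul_pos (show (0:ℝ) < ν ^ 2 by positivity) (neg_pos.mpr hr)]
  have hs2 : s ^ 2 = p ^ 2 - 16 * ν ^ 2 * r := by rw [hs]; exact Real.sq_sqrt hargs
  have hε2 : ε ^ 2 = 1 := by rcases hε with h | h <;> rw [h] <;> norm_num
  have h8 : (8 : ℝ) * ν * r ≠ 0 := mul_ne_zero (mul_ne_zero (by norm_num) hν) hr.ne
  have hae : a * (8 * ν * r) = p + ε * s := by rw [ha]; field_simp [hr.ne]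
  have hsq : (a * (8 * ν * r) - p) ^ 2 = p ^ 2 - 16 * ν ^ 2 * r := by
    rw [hae, ← hs2]; linear_combination s ^ 2 * hε2
  have h16 : (16 * (ν * r)) * (ν - p * a + 4 * r * ν * a ^ 2) = 0 := by
    linear_combination hsq
  have key1 : ν - p * a + 4 * r * ν * a ^ 2 = 0 := by
    rcases mul_eq_zero.mp h16 with h | h
    · exact absurd h (by simp [hνr])
    · exact h
  have key2 : q * A - 12 * r * ν * a = 0 := by rw [hA, ha]; field_simp [hr.ne]; ring
  -- notation
  set ξ := a * x - ν / α * t ^ α with hξdef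
  have hS : Real.sinh ξ ≠ 0 := sinh_ne_zero_of_ne_zero hξ
  have hlin : ∀ y : ℝ, HasDerivAt (fun y : ℝ => a * y - ν / α * t ^ α) a y := fun y => by
    simpa using ((hasDerivAt_id y).const_mul a).sub_const (ν / α * t ^ α)
  -- inner time derivative
  have hτ : HasDerivAt (fun τ : ℝ => a * x - ν / α * τ ^ α) (-(ν * t ^ (α - 1))) t := by
    have hpow : HasDerivAt (fun τ : ℝ => τ ^ α) (α * t ^ (α - 1)) t :=
      Real.hasDerivAt_rpow_const (Or.inl ht.ne')
    have h := (hpow.const_mul (ν / α)).const_sub (a * x)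
    refine h.congr_deriv ?_
    field_simp
  -- the four derivative terms
  have D1 : deriv (fun τ : ℝ => A * (1 / Real.sinh (a * x - ν / α * τ ^ α)) ^ 2) t
      = (-2 * A * Real.cosh ξ / Real.sinh ξ ^ 3) * (-(ν * t ^ (α - 1))) :=
    ((gderiv A hS).comp t hτ :).deriv
  have D2 : deriv (fun y : ℝ => A * (1 / Real.sinh (a * y - ν / α * t ^ α)) ^ 2) x
      = (-2 * A * Real.cosh ξ / Real.sinh ξ ^ 3) * a :=
    ((gderiv A hS).comp x (hlin x) :).deriv
  have hct : ContinuousAt (fun τ : ℝ => a * x - ν / α * τ ^ α) t := by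
    have h := Real.continuousAt_rpow_const t α (Or.inl ht.ne')
    exact continuousAt_const.sub (h.const_mul (ν / α))
  have hevt : ∀ᶠ τ in nhds t, a * x - ν / α * τ ^ α ≠ 0 := hct.eventually_ne hξ
  have heq : (fun τ : ℝ => deriv (deriv
        (fun y : ℝ => A * (1 / Real.sinh (a * y - ν / α * τ ^ α)) ^ 2)) x)
      =ᶠ[nhds t] fun τ : ℝ => a ^ 2 * A *
        (4 / Real.sinh (a * x - ν / α * τ ^ α) ^ 2
          + 6 / Real.sinh (a * x - ν / α * τ ^ α) ^ 4) := by
    filter_upwards [hevt] with τ hτ'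
    exact dd A a (ν / α * τ ^ α) x hτ'
  have D4 : deriv (fun τ : ℝ => deriv (deriv
        (fun y : ℝ => A * (1 / Real.sinh (a * y - ν / α * τ ^ α)) ^ 2)) x) t
      = a ^ 2 * A * ((-8 * Real.cosh ξ / Real.sinh ξ ^ 3
          - 24 * Real.cosh ξ / Real.sinh ξ ^ 5) * (-(ν * t ^ (α - 1)))) := by
    rw [heq.deriv_eq]
    exact (((g3deriv hS).comp t hτ).const_mul (a ^ 2 * A)).deriv
  rw [D1, D2, D4]
  -- power cancellation
  have hT : t ^ (1 - α) * t ^ (α - 1) = 1 := by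
    rw [← Real.rpow_add ht]; norm_num
  have e1 : t ^ (1 - α) * ((-2 * A * Real.cosh ξ / Real.sinh ξ ^ 3) * (-(ν * t ^ (α - 1))))
      = 2 * A * ν * Real.cosh ξ / Real.sinh ξ ^ 3 := by
    have h : t ^ (1 - α) * ((-2 * A * Real.cosh ξ / Real.sinh ξ ^ 3) * (-(ν * t ^ (α - 1))))
        = (t ^ (1 - α) * t ^ (α - 1)) * (2 * A * ν * Real.cosh ξ / Real.sinh ξ ^ 3) := by
      ring
    rw [h, hT, one_mul]
  have e4 : r * t ^ (1 - α) * (a ^ 2 * A * ((-8 * Real.cosh ξ / Real.sinh ξ ^ 3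
        - 24 * Real.cosh ξ / Real.sinh ξ ^ 5) * (-(ν * t ^ (α - 1)))))
      = r * ν * a ^ 2 * A * (8 * Real.cosh ξ / Real.sinh ξ ^ 3
        + 24 * Real.cosh ξ / Real.sinh ξ ^ 5) := by
    have h : r * t ^ (1 - α) * (a ^ 2 * A * ((-8 * Real.cosh ξ / Real.sinh ξ ^ 3
        - 24 * Real.cosh ξ / Real.sinh ξ ^ 5) * (-(ν * t ^ (α - 1)))))
        = (t ^ (1 - α) * t ^ (α - 1)) * (r * ν * a ^ 2 * A *
          (8 * Real.cosh ξ / Real.sinh ξ ^ 3 + 24 * Real.cosh ξ / Real.sinh ξ ^ 5)) := by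
      ring
    rw [h, hT, one_mul]
  rw [e1, e4]
  have key2' : 12 * r * ν * a - q * A = 0 := by linarith
  have final : 2 * A * ν * Real.cosh ξ / Real.sinh ξ ^ 3
      + p * (-2 * A * Real.cosh ξ / Real.sinh ξ ^ 3 * a)
      + q * (A * (1 / Real.sinh ξ) ^ 2) * (-2 * A * Real.cosh ξ / Real.sinh ξ ^ 3 * a)
      + r * ν * a ^ 2 * A * (8 * Real.cosh ξ / Real.sinh ξ ^ 3
          + 24 * Real.cosh ξ / Real.sinh ξ ^ 5)
      = A * (ν - p * a + 4 * r * ν * a ^ 2) * (2 * Real.cosh ξ / Real.sinh ξ ^ 3)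
        + (12 * r * ν * a - q * A) * (2 * a * A * Real.cosh ξ / Real.sinh ξ ^ 5) := by
    field_simp
    ring
  rw [final, key1, key2']
  ring
end

section
/- Let p, q, a, ν be real numbers with p ≠ 0, and suppose that 4 q a² + 1 = 0 and A = 12 ν q a / p. Then the function U(ξ) = A · csch²(ξ) satisfies −ν U(ξ) + (p a / 2) U(ξ)² − ν q a² U″(ξ) = 0 for all ξ ≠ 0. -/
/-- If `4 q a² + 1 = 0` and `A = 12 ν q a / p` (with `p ≠ 0`), then
`U(ξ) = A csch²(ξ)` solves the once-integrated EW traveling wave equation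
`-ν U + (p a / 2) U² - ν q a² U'' = 0` for all `ξ ≠ 0`. -/
theorem ew_csch_solution
    (p q a ν A : ℝ) (hp : p ≠ 0)
    (h1 : 4 * q * a ^ 2 + 1 = 0)
    (hA : A = 12 * ν * q * a / p) :
    ∀ ξ : ℝ, ξ ≠ 0 →
      -ν * (A * (1 / Real.sinh ξ) ^ 2)
      + p * a / 2 * (A * (1 / Real.sinh ξ) ^ 2) ^ 2
      - ν * q * a ^ 2 * deriv (deriv (fun ξ : ℝ => A * (1 / Real.sinh ξ) ^ 2)) ξ = 0 := by
  intro ξ hξ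
  have hs : Real.sinh ξ ≠ 0 := fun h => hξ (Real.sinh_eq_zero.mp h)
  set f : ℝ → ℝ := fun x => A * (1 / Real.sinh x) ^ 2 with hf
  set g : ℝ → ℝ := fun x => -2 * A * Real.cosh x / Real.sinh x ^ 3 with hg
  have key : ∀ x : ℝ, Real.sinh x ≠ 0 → HasDerivAt f (g x) x := by
    intro x hx
    have h1 : HasDerivAt Real.sinh (Real.cosh x) x := Real.hasDerivAt_sinh x
    have h2 : HasDerivAt (fun y => Real.sinh y ^ 2) (2 * Real.sinh x ^ 1 * Real.cosh x) x :=
      h1.pow 2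
    have h3 := (h2.inv (pow_ne_zero 2 hx)).const_mul A
    have hfe : f = fun y => A * (Real.sinh y ^ 2)⁻¹ := by
      funext y; simp [hf, one_div, inv_pow]
    rw [hfe]
    refine h3.congr_deriv ?_
    simp only [hg]
    field_simp
  have hopen : IsOpen {x : ℝ | Real.sinh x ≠ 0} :=
    isOpen_ne.preimage Real.continuous_sinh
  have hev : deriv f =ᶠ[nhds ξ] g := by
    filter_upwards [hopen.mem_nhds hs] with x hx
    exact (key x hx).deriv
  have hd2 : deriv (deriv f) ξ = deriv g ξ := hev.deriv_eq
  have hg' : HasDerivAt g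
      ((-2 * A * Real.sinh ξ * Real.sinh ξ ^ 3 -
        (-2 * A * Real.cosh ξ) * (3 * Real.sinh ξ ^ 2 * Real.cosh ξ)) /
        (Real.sinh ξ ^ 3) ^ 2) ξ := by
    have hnum : HasDerivAt (fun x => -2 * A * Real.cosh x) (-2 * A * Real.sinh ξ) ξ := by
      simpa [mul_comm] using (Real.hasDerivAt_cosh ξ).const_mul (-2 * A)
    have hden : HasDerivAt (fun x => Real.sinh x ^ 3)
        (3 * Real.sinh ξ ^ 2 * Real.cosh ξ) ξ := by
      exact ((Real.hasDerivAt_sinh ξ).pow 3).congr_deriv (by norm_num)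
    exact hnum.div hden (pow_ne_zero 3 hs)
  rw [hd2, hg'.deriv]
  have hcosh : Real.cosh ξ ^ 2 = Real.sinh ξ ^ 2 + 1 := by
    have := Real.cosh_sq_sub_sinh_sq ξ; nlinarith [this]
  have hqa : q * a ^ 2 = -(1/4) := by linarith
  have hAe : p * A = 12 * ν * q * a := by
    rw [hA]; field_simp
  have h5 : p * a * A ^ 2 = -3 * ν * A := by
    linear_combination a * A * hAe + 12 * ν * A * hqa
  field_simp
  linear_combination h5 +
    (4 * ν * A * Real.sinh ξ ^ 2 - 12 * ν * A * Real.cosh ξ ^ 2) * hqa +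
    (3 * ν * A) * hcosh
end

section
/- Let α ∈ (0,1], let p, q, ν be real numbers with p ≠ 0, ν ≠ 0, q < 0, and let ε ∈ {1, −1}. Set a = ε √(−1/(4q)) and A = −12 ν q a / p. Then the function u(x,t) = A · sech²(a x − (ν/α) t^α) satisfies the conformable time fractional EW equation t^{1−α} ∂u/∂t + p u ∂u/∂x + q · t^{1−α} ∂/∂t(∂²u/∂x²) = 0 for all x ∈ ℝ and all t > 0. -/
open Real

/-- derivative of the sech² profile -/
lemma ew_hg (A y : ℝ) :
    HasDerivAt (fun ξ : ℝ => A * (1 / Real.cosh ξ) ^ 2)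
      (-2 * A * Real.sinh y / Real.cosh y ^ 3) y := by
  have hc : Real.cosh y ≠ 0 := (Real.cosh_pos y).ne'
  have h := ((Real.hasDerivAt_cosh y).inv hc).pow 2
  have h2 := h.const_mul A
  simp only [one_div]
  refine h2.congr_deriv ?_
  simp only [Pi.inv_apply, Pi.pow_apply]
  field_simp
  linear_combination (-(2 * A * Real.sinh y)) * mul_inv_cancel₀ hc

lemma ew_hg1 (A y : ℝ) :
    HasDerivAt (fun ξ : ℝ => -2 * A * Real.sinh ξ / Real.cosh ξ ^ 3)
      (-2 * A * (Real.cosh y ^ 2 - 3 * Real.sinh y ^ 2) / Real.cosh y ^ 4) y := by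
  have hc : Real.cosh y ≠ 0 := (Real.cosh_pos y).ne'
  have hn := (Real.hasDerivAt_sinh y).const_mul (-2 * A)
  have hd := (Real.hasDerivAt_cosh y).pow 3
  have h := hn.div hd (pow_ne_zero _ hc)
  refine h.congr_deriv ?_
  simp only [Pi.pow_apply]
  field_simp
  ring

lemma ew_hg2 (A y : ℝ) :
    HasDerivAt (fun ξ : ℝ => -2 * A * (Real.cosh ξ ^ 2 - 3 * Real.sinh ξ ^ 2) / Real.cosh ξ ^ 4)
      (8 * A * Real.sinh y * (2 * Real.cosh y ^ 2 - 3 * Real.sinh y ^ 2) / Real.cosh y ^ 5) y := by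
  have hc : Real.cosh y ≠ 0 := (Real.cosh_pos y).ne'
  have hn := (((Real.hasDerivAt_cosh y).pow 2).sub
      (((Real.hasDerivAt_sinh y).pow 2).const_mul 3)).const_mul (-2 * A)
  have hd := (Real.hasDerivAt_cosh y).pow 4
  have h := hn.div hd (pow_ne_zero _ hc)
  refine h.congr_deriv ?_
  simp only [Pi.pow_apply, Pi.sub_apply]
  field_simp
  ring

/-- The sech²-type traveling wave solutions of the conformable time fractional EW
equation `t^(1-α) u_t + p u u_x + q t^(1-α) ∂_t (u_xx) = 0`. -/
theorem ew_sech_pde_solution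
    (α p q ν ε : ℝ) (hα : α ∈ Set.Ioc (0 : ℝ) 1)
    (hp : p ≠ 0) (hν : ν ≠ 0) (hq : q < 0) (hε : ε = 1 ∨ ε = -1)
    (a A : ℝ)
    (ha : a = ε * Real.sqrt (-1 / (4 * q)))
    (hA : A = -12 * ν * q * a / p) :
    ∀ x t : ℝ, 0 < t →
      t ^ (1 - α) *
        deriv (fun τ : ℝ => A * (1 / Real.cosh (a * x - ν / α * τ ^ α)) ^ 2) t
      + p * (A * (1 / Real.cosh (a * x - ν / α * t ^ α)) ^ 2)
          * deriv (fun y : ℝ => A * (1 / Real.cosh (a * y - ν / α * t ^ α)) ^ 2) x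
      + q * t ^ (1 - α) *
          deriv (fun τ : ℝ =>
            deriv (deriv
              (fun y : ℝ => A * (1 / Real.cosh (a * y - ν / α * τ ^ α)) ^ 2)) x) t = 0 := by
  obtain ⟨hα0, hα1⟩ := hα
  intro x t ht
  have hαne : α ≠ 0 := ne_of_gt hα0
  have hq4 : (0:ℝ) < -1 / (4 * q) := by
    apply div_pos_of_neg_of_neg <;> linarith
  have ha2 : a ^ 2 = -1 / (4 * q) := by
    rcases hε with h | h <;> rw [ha, h, mul_pow, Real.sq_sqrt hq4.le] <;> ring
  -- ξ derivative in τ at t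
  have hξt : HasDerivAt (fun τ : ℝ => a * x - ν / α * τ ^ α)
      (-(ν / α * (α * t ^ (α - 1)))) t := by
    exact ((Real.hasDerivAt_rpow_const (p := α) (Or.inl ht.ne')).const_mul (ν / α)).const_sub (a * x)
  set ξ : ℝ := a * x - ν / α * t ^ α with hξdef
  -- first term
  have h1 : deriv (fun τ : ℝ => A * (1 / Real.cosh (a * x - ν / α * τ ^ α)) ^ 2) t
      = -2 * A * Real.sinh ξ / Real.cosh ξ ^ 3 * (-(ν / α * (α * t ^ (α - 1)))) := by
    exact ((ew_hg A ξ).comp t hξt).deriv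
  -- x-derivative (for arbitrary b, point y)
  have hdx : ∀ b y : ℝ, HasDerivAt (fun y : ℝ => A * (1 / Real.cosh (a * y - b)) ^ 2)
      (-2 * A * Real.sinh (a * y - b) / Real.cosh (a * y - b) ^ 3 * a) y := by
    intro b y
    have hl : HasDerivAt (fun y : ℝ => a * y - b) a y := by
      simpa using ((hasDerivAt_id y).const_mul a).sub_const b
    exact (ew_hg A (a * y - b)).comp (h := fun y : ℝ => a * y - b) y hl
  have h2 : deriv (fun y : ℝ => A * (1 / Real.cosh (a * y - ν / α * t ^ α)) ^ 2) x
      = -2 * A * Real.sinh ξ / Real.cosh ξ ^ 3 * a := (hdx _ x).deriv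
  -- second x-derivative as function of τ
  have h3 : ∀ τ : ℝ, deriv (deriv
      (fun y : ℝ => A * (1 / Real.cosh (a * y - ν / α * τ ^ α)) ^ 2)) x
      = -2 * A * (Real.cosh (a * x - ν / α * τ ^ α) ^ 2
          - 3 * Real.sinh (a * x - ν / α * τ ^ α) ^ 2)
          / Real.cosh (a * x - ν / α * τ ^ α) ^ 4 * a * a := by
    intro τ
    have hfun : deriv (fun y : ℝ => A * (1 / Real.cosh (a * y - ν / α * τ ^ α)) ^ 2)
        = fun y : ℝ => -2 * A * Real.sinh (a * y - ν / α * τ ^ α)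
            / Real.cosh (a * y - ν / α * τ ^ α) ^ 3 * a := by
      funext y; exact (hdx _ y).deriv
    rw [hfun]
    have hl : HasDerivAt (fun y : ℝ => a * y - ν / α * τ ^ α) a x := by
      simpa using ((hasDerivAt_id x).const_mul a).sub_const (ν / α * τ ^ α)
    have := (((ew_hg1 A (a * x - ν / α * τ ^ α)).comp x hl).mul_const a).deriv
    simpa using this
  have h4 : deriv (fun τ : ℝ => deriv (deriv
      (fun y : ℝ => A * (1 / Real.cosh (a * y - ν / α * τ ^ α)) ^ 2)) x) t
      = 8 * A * Real.sinh ξ * (2 * Real.cosh ξ ^ 2 - 3 * Real.sinh ξ ^ 2) / Real.cosh ξ ^ 5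
          * (-(ν / α * (α * t ^ (α - 1)))) * a * a := by
    have hfun : (fun τ : ℝ => deriv (deriv
        (fun y : ℝ => A * (1 / Real.cosh (a * y - ν / α * τ ^ α)) ^ 2)) x)
        = fun τ : ℝ => -2 * A * (Real.cosh (a * x - ν / α * τ ^ α) ^ 2
            - 3 * Real.sinh (a * x - ν / α * τ ^ α) ^ 2)
            / Real.cosh (a * x - ν / α * τ ^ α) ^ 4 * a * a := funext h3
    rw [hfun]
    have := ((((ew_hg2 A ξ).comp t hξt).mul_const a).mul_const a).deriv
    simpa using this
  rw [h1, h2, h4]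
  -- algebra
  have hc : Real.cosh ξ ≠ 0 := (Real.cosh_pos ξ).ne'
  have hs : Real.sinh ξ ^ 2 = Real.cosh ξ ^ 2 - 1 := by
    have := Real.cosh_sq ξ; linarith
  have hPQ : t ^ (1 - α) * t ^ (α - 1) = 1 := by
    rw [← Real.rpow_add ht]; norm_num
  have hAq : p * A = -12 * ν * q * a := by rw [hA]; field_simp
  have h4q : (4:ℝ) * q ≠ 0 := mul_ne_zero (by norm_num) hq.ne
  have hqa : 4 * q * a ^ 2 = -1 := by
    rw [ha2]; field_simp; simp [hq.ne]
  field_simp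
  linear_combination (-2 * A * Real.sinh ξ) *
    ((-ν * Real.cosh ξ ^ 2 * (1 - 8 * a ^ 2 * q) - 12 * Real.sinh ξ ^ 2 * ν * a ^ 2 * q) * hPQ
      + a * hAq - 12 * ν * a ^ 2 * q * hs - ν * Real.cosh ξ ^ 2 * hqa)
end

section
/- Let α ∈ (0,1], let p, q, ν be real numbers with p ≠ 0, ν ≠ 0, q < 0, and let ε ∈ {1, −1}. Set a = ε √(−1/(4q)) and A = 12 ν q a / p. Then the function u(x,t) = A · csch²(a x − (ν/α) t^α) satisfies the conformable time fractional EW equation t^{1−α} ∂u/∂t + p u ∂u/∂x + q · t^{1−α} ∂/∂t(∂²u/∂x²) = 0 at every point (x,t) with t > 0 and a x − (ν/α) t^α ≠ 0. -/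
open Real Filter

noncomputable def g1 (A ξ : ℝ) : ℝ := -2 * A * Real.cosh ξ / Real.sinh ξ ^ 3
noncomputable def g2 (A ξ : ℝ) : ℝ :=
  (6 * A * Real.cosh ξ ^ 2 - 2 * A * Real.sinh ξ ^ 2) / Real.sinh ξ ^ 4
noncomputable def g3 (A ξ : ℝ) : ℝ :=
  (16 * A * Real.cosh ξ * Real.sinh ξ ^ 2 - 24 * A * Real.cosh ξ ^ 3) / Real.sinh ξ ^ 5

lemma hd1 (A : ℝ) {z : ℝ} (hz : Real.sinh z ≠ 0) :
    HasDerivAt (fun ξ => A * (1 / Real.sinh ξ) ^ 2) (g1 A z) z := by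
  have h : HasDerivAt (fun ξ => A / Real.sinh ξ ^ 2)
      ((0 * Real.sinh z ^ 2 - A * (2 * Real.sinh z ^ 1 * Real.cosh z)) / (Real.sinh z ^ 2) ^ 2)
      z := (hasDerivAt_const z A).div ((Real.hasDerivAt_sinh z).pow 2) (pow_ne_zero 2 hz)
  have he : (fun ξ : ℝ => A * (1 / Real.sinh ξ) ^ 2) = fun ξ => A / Real.sinh ξ ^ 2 := by
    funext ξ; ring
  rw [he]
  convert h using 1
  unfold g1; field_simp; ring

lemma hd2 (A : ℝ) {z : ℝ} (hz : Real.sinh z ≠ 0) :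
    HasDerivAt (fun ξ => g1 A ξ) (g2 A z) z := by
  have h : HasDerivAt (fun ξ => -2 * A * Real.cosh ξ / Real.sinh ξ ^ 3)
      ((-2 * A * Real.sinh z * Real.sinh z ^ 3 -
        -2 * A * Real.cosh z * (3 * Real.sinh z ^ 2 * Real.cosh z)) / (Real.sinh z ^ 3) ^ 2)
      z := (((Real.hasDerivAt_cosh z).const_mul (-2 * A)).div
      ((Real.hasDerivAt_sinh z).pow 3) (pow_ne_zero 3 hz))
  refine h.congr_deriv ?_
  unfold g2; field_simp; ring

lemma hd3 (A : ℝ) {z : ℝ} (hz : Real.sinh z ≠ 0) :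
    HasDerivAt (fun ξ => g2 A ξ) (g3 A z) z := by
  have hn : HasDerivAt (fun ξ => 6 * A * Real.cosh ξ ^ 2 - 2 * A * Real.sinh ξ ^ 2)
      (6 * A * (2 * Real.cosh z ^ 1 * Real.sinh z) - 2 * A * (2 * Real.sinh z ^ 1 * Real.cosh z))
      z := (((Real.hasDerivAt_cosh z).pow 2).const_mul (6 * A)).sub
        (((Real.hasDerivAt_sinh z).pow 2).const_mul (2 * A))
  have h := hn.div ((Real.hasDerivAt_sinh z).pow 4) (pow_ne_zero 4 hz)
  refine h.congr_deriv ?_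
  unfold g3
  have hc : Real.cosh z ^ 2 = Real.sinh z ^ 2 + 1 := Real.cosh_sq z
  simp only [Pi.pow_apply]
  field_simp
  ring

lemma lin_hasDerivAt (a C y : ℝ) : HasDerivAt (fun y : ℝ => a * y - C) a y := by
  simpa using ((hasDerivAt_id y).const_mul a).sub_const C

lemma uxx_eq (A a C x' : ℝ) (h : Real.sinh (a * x' - C) ≠ 0) :
    deriv (deriv (fun y : ℝ => A * (1 / Real.sinh (a * y - C)) ^ 2)) x'
      = g2 A (a * x' - C) * a ^ 2 := by
  have hev : ∀ᶠ y in nhds x', Real.sinh (a * y - C) ≠ 0 :=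
    ((Real.continuous_sinh.comp ((continuous_const.mul continuous_id).sub
      continuous_const)).continuousAt).eventually_ne h
  have hde : (deriv (fun y : ℝ => A * (1 / Real.sinh (a * y - C)) ^ 2))
      =ᶠ[nhds x'] fun y => g1 A (a * y - C) * a :=
    hev.mono fun y hy => by have := ((hd1 A hy).comp y (lin_hasDerivAt a C y)).deriv; exact this
  rw [hde.deriv_eq]
  have h2 : HasDerivAt (fun y : ℝ => g1 A (a * y - C) * a)
      (g2 A (a * x' - C) * a * a) x' :=
    by have := (((hd2 A h).comp x' (lin_hasDerivAt a C x'))).mul_const a; exact this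
  rw [h2.deriv]; ring

/-- The csch²-type traveling wave solutions of the conformable time fractional EW
equation `t^(1-α) u_t + p u u_x + q t^(1-α) ∂_t (u_xx) = 0`, valid where the wave
variable is nonzero. -/
theorem ew_csch_pde_solution
    (α p q ν ε : ℝ) (hα : α ∈ Set.Ioc (0 : ℝ) 1)
    (hp : p ≠ 0) (hν : ν ≠ 0) (hq : q < 0) (hε : ε = 1 ∨ ε = -1)
    (a A : ℝ)
    (ha : a = ε * Real.sqrt (-1 / (4 * q)))
    (hA : A = 12 * ν * q * a / p) :
    ∀ x t : ℝ, 0 < t → a * x - ν / α * t ^ α ≠ 0 →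
      t ^ (1 - α) *
        deriv (fun τ : ℝ => A * (1 / Real.sinh (a * x - ν / α * τ ^ α)) ^ 2) t
      + p * (A * (1 / Real.sinh (a * x - ν / α * t ^ α)) ^ 2)
          * deriv (fun y : ℝ => A * (1 / Real.sinh (a * y - ν / α * t ^ α)) ^ 2) x
      + q * t ^ (1 - α) *
          deriv (fun τ : ℝ =>
            deriv (deriv
              (fun y : ℝ => A * (1 / Real.sinh (a * y - ν / α * τ ^ α)) ^ 2)) x) t = 0 := by
  intro x t ht hz0
  have hα0 : α ≠ 0 := hα.1.ne'
  set z := a * x - ν / α * t ^ α with hzdef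
  have hs : Real.sinh z ≠ 0 := fun h => hz0 (Real.sinh_eq_zero.mp h)
  -- derivative of the wave variable in τ
  have ht' : HasDerivAt (fun τ : ℝ => a * x - ν / α * τ ^ α) (-ν * t ^ (α - 1)) t := by
    have hrp : HasDerivAt (fun τ : ℝ => τ ^ α) (α * t ^ (α - 1)) t :=
      Real.hasDerivAt_rpow_const (Or.inl ht.ne')
    have := (hrp.const_mul (ν / α)).const_sub (a * x)
    refine this.congr_deriv ?_
    field_simp
  -- term 1
  have hT1 : deriv (fun τ : ℝ => A * (1 / Real.sinh (a * x - ν / α * τ ^ α)) ^ 2) t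
      = g1 A z * (-ν * t ^ (α - 1)) := by have := ((hd1 A hs).comp t ht').deriv; exact this
  -- term 2
  have hT2 : deriv (fun y : ℝ => A * (1 / Real.sinh (a * y - ν / α * t ^ α)) ^ 2) x
      = g1 A z * a := by have := ((hd1 A hs).comp x (lin_hasDerivAt a (ν / α * t ^ α) x)).deriv; exact this
  -- term 3
  have hevt : ∀ᶠ τ in nhds t, Real.sinh (a * x - ν / α * τ ^ α) ≠ 0 := by
    have hcont : ContinuousAt (fun τ : ℝ => Real.sinh (a * x - ν / α * τ ^ α)) t :=
      Real.continuous_sinh.continuousAt.comp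
        ((continuousAt_const.sub (continuousAt_const.mul
          (Real.continuousAt_rpow_const t α (Or.inl ht.ne')))))
    exact hcont.eventually_ne hs
  have hde3 : (fun τ : ℝ =>
        deriv (deriv (fun y : ℝ => A * (1 / Real.sinh (a * y - ν / α * τ ^ α)) ^ 2)) x)
      =ᶠ[nhds t] fun τ => g2 A (a * x - ν / α * τ ^ α) * a ^ 2 :=
    hevt.mono fun τ hτ => uxx_eq A a (ν / α * τ ^ α) x hτ
  have hT3 : deriv (fun τ : ℝ =>
        deriv (deriv (fun y : ℝ => A * (1 / Real.sinh (a * y - ν / α * τ ^ α)) ^ 2)) x) t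
      = g3 A z * (-ν * t ^ (α - 1)) * a ^ 2 := by
    rw [hde3.deriv_eq]
    exact (((hd3 A hs).comp t ht').mul_const (a ^ 2)).deriv
  rw [hT1, hT2, hT3]
  -- algebra
  have htt : t ^ (1 - α) * t ^ (α - 1) = 1 := by
    rw [← Real.rpow_add ht]; norm_num
  have haq : 4 * q * a ^ 2 = -1 := by
    have h4q : 4 * q < 0 := by linarith
    have h4q' : 4 * q ≠ 0 := h4q.ne
    have hnn : (0 : ℝ) ≤ -1 / (4 * q) := le_of_lt (div_pos_of_neg_of_neg (by norm_num) h4q)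
    have hsq : Real.sqrt (-1 / (4 * q)) ^ 2 = -1 / (4 * q) := Real.sq_sqrt hnn
    have ha2 : a ^ 2 = -1 / (4 * q) := by
      rcases hε with h | h <;> rw [ha, h, mul_pow, hsq] <;> norm_num
    rw [ha2]; field_simp; rw [div_self hq.ne]
  have hc : Real.cosh z ^ 2 = Real.sinh z ^ 2 + 1 := Real.cosh_sq z
  subst hA
  unfold g1 g3
  field_simp
  linear_combination
    12 * ν ^ 2 * q * a * Real.cosh z *
      (24 * q * a ^ 2 * (t ^ (1 - α)) * (t ^ (α - 1)) * hc
        + 2 * (t ^ (1 - α)) * (t ^ (α - 1)) * Real.sinh z ^ 2 * haq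
        + 24 * q * a ^ 2 * htt)
end

section
/- Let p, q, r, a, ν be real numbers with q ≠ 0, and suppose that p a² + ν² + 4 r ν² a² = 0 and A = 12 ν² a / q. Then the function U(ξ) = A · csch²(ξ) satisfies (p a² + ν²) U′(ξ) − r q a U(ξ) U′(ξ) + r ν² a² U‴(ξ) = 0 for all ξ ≠ 0. -/
open Real Filter

private lemma srlw_d1 (A : ℝ) {x : ℝ} (hx : x ≠ 0) :
    HasDerivAt (fun ξ : ℝ => A * (1 / Real.sinh ξ) ^ 2)
      (-2 * A * Real.cosh x / Real.sinh x ^ 3) x := by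
  have hs : Real.sinh x ≠ 0 := Real.sinh_ne_zero.mpr hx
  have h := (((Real.hasDerivAt_sinh x).inv hs).pow 2).const_mul A
  simp only [one_div]
  refine h.congr_deriv ?_
  simp only [Pi.pow_apply, Pi.inv_apply]
  ring_nf

private lemma srlw_d2 (A : ℝ) {x : ℝ} (hx : x ≠ 0) :
    HasDerivAt (fun ξ : ℝ => -2 * A * Real.cosh ξ / Real.sinh ξ ^ 3)
      ((4 * A * Real.sinh x ^ 2 + 6 * A) / Real.sinh x ^ 4) x := by
  have hs : Real.sinh x ≠ 0 := Real.sinh_ne_zero.mpr hx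
  have hs3 : Real.sinh x ^ 3 ≠ 0 := pow_ne_zero _ hs
  have h := ((Real.hasDerivAt_cosh x).const_mul (-2 * A)).div
    ((Real.hasDerivAt_sinh x).pow 3) hs3
  refine h.congr_deriv ?_
  have hc := Real.cosh_sq x
  simp only [Pi.pow_apply, Pi.inv_apply]
  field_simp
  linear_combination (6 * A * Real.sinh x ^ 2) * hc

private lemma srlw_d3 (A : ℝ) {x : ℝ} (hx : x ≠ 0) :
    HasDerivAt (fun ξ : ℝ => (4 * A * Real.sinh ξ ^ 2 + 6 * A) / Real.sinh ξ ^ 4)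
      (-8 * A * Real.cosh x / Real.sinh x ^ 3
        - 24 * A * Real.cosh x / Real.sinh x ^ 5) x := by
  have hs : Real.sinh x ≠ 0 := Real.sinh_ne_zero.mpr hx
  have hs4 : Real.sinh x ^ 4 ≠ 0 := pow_ne_zero _ hs
  have h := (((((Real.hasDerivAt_sinh x).pow 2).const_mul (4 * A)).add_const (6 * A)).div
    ((Real.hasDerivAt_sinh x).pow 4) hs4)
  refine h.congr_deriv ?_
  simp only [Pi.pow_apply, Pi.inv_apply]
  field_simp
  ring

/-- If `p a² + ν² + 4 r ν² a² = 0` and `A = 12 ν² a / q` (with `q ≠ 0`), then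
`U(ξ) = A csch²(ξ)` solves the once-integrated sRLW traveling wave equation
`(p a² + ν²) U' - r q a U U' + r ν² a² U''' = 0` for all `ξ ≠ 0`. -/
theorem srlw_csch_solution
    (p q r a ν A : ℝ) (hq : q ≠ 0)
    (h1 : p * a ^ 2 + ν ^ 2 + 4 * r * ν ^ 2 * a ^ 2 = 0)
    (hA : A = 12 * ν ^ 2 * a / q) :
    ∀ ξ : ℝ, ξ ≠ 0 →
      (p * a ^ 2 + ν ^ 2) * deriv (fun ξ : ℝ => A * (1 / Real.sinh ξ) ^ 2) ξ
      - r * q * a * (A * (1 / Real.sinh ξ) ^ 2)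
          * deriv (fun ξ : ℝ => A * (1 / Real.sinh ξ) ^ 2) ξ
      + r * ν ^ 2 * a ^ 2
          * deriv (deriv (deriv (fun ξ : ℝ => A * (1 / Real.sinh ξ) ^ 2))) ξ = 0 := by
  intro ξ hξ
  set f : ℝ → ℝ := fun ξ : ℝ => A * (1 / Real.sinh ξ) ^ 2 with hf
  set g1 : ℝ → ℝ := fun ξ : ℝ => -2 * A * Real.cosh ξ / Real.sinh ξ ^ 3 with hg1
  set g2 : ℝ → ℝ := fun ξ : ℝ => (4 * A * Real.sinh ξ ^ 2 + 6 * A) / Real.sinh ξ ^ 4 with hg2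
  have hmem : ∀ x : ℝ, x ≠ 0 → {y : ℝ | y ≠ 0} ∈ nhds x := fun x hx =>
    isOpen_compl_singleton.mem_nhds hx
  -- first derivative eventually equals g1 near any nonzero point
  have e1 : ∀ x : ℝ, x ≠ 0 → deriv f =ᶠ[nhds x] g1 := fun x hx =>
    eventually_of_mem (hmem x hx) (fun y hy => (srlw_d1 A hy).deriv)
  have e2 : ∀ x : ℝ, x ≠ 0 → deriv (deriv f) =ᶠ[nhds x] g2 := by
    intro x hx
    refine eventually_of_mem (hmem x hx) (fun y hy => ?_)
    rw [(e1 y hy).deriv_eq, (srlw_d2 A hy).deriv]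
  have hD1 : deriv f ξ = g1 ξ := (srlw_d1 A hξ).deriv
  have hD3 : deriv (deriv (deriv f)) ξ =
      -8 * A * Real.cosh ξ / Real.sinh ξ ^ 3
        - 24 * A * Real.cosh ξ / Real.sinh ξ ^ 5 := by
    rw [Filter.EventuallyEq.deriv_eq (e2 ξ hξ), (srlw_d3 A hξ).deriv]
  rw [hD1, hD3]
  have hs : Real.sinh ξ ≠ 0 := Real.sinh_ne_zero.mpr hξ
  have hcoef : p * a ^ 2 + ν ^ 2 = -4 * r * ν ^ 2 * a ^ 2 := by linarith
  have hAq : A * q = 12 * ν ^ 2 * a := by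
    rw [hA]; field_simp
  rw [hcoef, hg1]
  field_simp
  linear_combination (2 * r * A * a * Real.cosh ξ) * hAq
end

section
/- Let p, q, r, ν be real numbers with q ≠ 0, ν ≠ 0 and 4 ν² r + p < 0, and let ε ∈ {1, −1}. Set a = −ε ν √(−1/(4 ν² r + p)) and A = 12 ε (ν³/q) √(−1/(4 ν² r + p)). Then the function U(ξ) = A · sech²(ξ) satisfies (p a² + ν²) U′(ξ) − r q a U(ξ) U′(ξ) + r ν² a² U‴(ξ) = 0 for all ξ ∈ ℝ. -/
private lemma coshne (ξ : ℝ) : Real.cosh ξ ≠ 0 := (Real.cosh_pos ξ).ne'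

private lemma d1 (A : ℝ) :
    deriv (fun ξ : ℝ => A * (1 / Real.cosh ξ) ^ 2)
      = fun ξ => -2 * A * Real.sinh ξ / Real.cosh ξ ^ 3 := by
  funext ξ
  have hc := Real.hasDerivAt_cosh ξ
  have h : HasDerivAt (fun ξ : ℝ => A * (1 / Real.cosh ξ) ^ 2)
      (A * (2 * ((Real.cosh ξ)⁻¹) ^ 1 * (-(Real.sinh ξ) / Real.cosh ξ ^ 2))) ξ := by
    simpa [one_div] using (((hc.inv (coshne ξ)).pow 2).const_mul A)
  rw [h.deriv]
  field_simp [coshne ξ]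

private lemma d2 (A : ℝ) :
    deriv (fun ξ : ℝ => -2 * A * Real.sinh ξ / Real.cosh ξ ^ 3)
      = fun ξ => -2 * A / Real.cosh ξ ^ 2 + 6 * A * Real.sinh ξ ^ 2 / Real.cosh ξ ^ 4 := by
  funext ξ
  have hc := Real.hasDerivAt_cosh ξ
  have hs := Real.hasDerivAt_sinh ξ
  have h : HasDerivAt (fun ξ : ℝ => -2 * A * Real.sinh ξ / Real.cosh ξ ^ 3)
      ((-2 * A * Real.cosh ξ * Real.cosh ξ ^ 3
        - (-2 * A * Real.sinh ξ) * (3 * Real.cosh ξ ^ 2 * Real.sinh ξ))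
        / (Real.cosh ξ ^ 3) ^ 2) ξ := by
    have := ((hs.const_mul (-2 * A)).div (hc.pow 3) (pow_ne_zero 3 (coshne ξ)))
    exact this.congr_deriv (by simp only [Pi.pow_apply]; norm_num)
  rw [h.deriv]
  have hch := Real.cosh_sq ξ
  field_simp [coshne ξ]
  ring

private lemma d3 (A : ℝ) :
    deriv (fun ξ : ℝ => -2 * A / Real.cosh ξ ^ 2 + 6 * A * Real.sinh ξ ^ 2 / Real.cosh ξ ^ 4)
      = fun ξ => 16 * A * Real.sinh ξ / Real.cosh ξ ^ 3
          - 24 * A * Real.sinh ξ ^ 3 / Real.cosh ξ ^ 5 := by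
  funext ξ
  have hc := Real.hasDerivAt_cosh ξ
  have hs := Real.hasDerivAt_sinh ξ
  have h1 : HasDerivAt (fun ξ : ℝ => -2 * A / Real.cosh ξ ^ 2)
      ((0 * Real.cosh ξ ^ 2 - (-2 * A) * (2 * Real.cosh ξ ^ 1 * Real.sinh ξ))
        / (Real.cosh ξ ^ 2) ^ 2) ξ :=
    (hasDerivAt_const ξ (-2 * A)).div (hc.pow 2) (pow_ne_zero 2 (coshne ξ))
  have h2 : HasDerivAt (fun ξ : ℝ => 6 * A * Real.sinh ξ ^ 2 / Real.cosh ξ ^ 4)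
      ((6 * A * (2 * Real.sinh ξ ^ 1 * Real.cosh ξ) * Real.cosh ξ ^ 4
        - 6 * A * Real.sinh ξ ^ 2 * (4 * Real.cosh ξ ^ 3 * Real.sinh ξ))
        / (Real.cosh ξ ^ 4) ^ 2) ξ := by
    have := ((hs.pow 2).const_mul (6 * A)).div (hc.pow 4) (pow_ne_zero 4 (coshne ξ))
    exact this.congr_deriv (by simp only [Pi.pow_apply]; norm_num)
  rw [HasDerivAt.deriv (f := fun ξ : ℝ => -2 * A / Real.cosh ξ ^ 2 + 6 * A * Real.sinh ξ ^ 2 / Real.cosh ξ ^ 4) (h1.add h2)]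
  field_simp [coshne ξ]
  ring

/-- The sech²-type traveling wave solutions of the once-integrated sRLW equation
`(p a² + ν²) U' - r q a U U' + r ν² a² U''' = 0` with explicit parameters. -/
theorem srlw_sech_explicit_solution
    (p q r ν ε : ℝ) (hq : q ≠ 0) (hν : ν ≠ 0)
    (hpr : 4 * ν ^ 2 * r + p < 0) (hε : ε = 1 ∨ ε = -1)
    (a A : ℝ)
    (ha : a = -ε * ν * Real.sqrt (-1 / (4 * ν ^ 2 * r + p)))
    (hA : A = 12 * ε * (ν ^ 3 / q) * Real.sqrt (-1 / (4 * ν ^ 2 * r + p))) :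
    ∀ ξ : ℝ,
      (p * a ^ 2 + ν ^ 2) * deriv (fun ξ : ℝ => A * (1 / Real.cosh ξ) ^ 2) ξ
      - r * q * a * (A * (1 / Real.cosh ξ) ^ 2)
          * deriv (fun ξ : ℝ => A * (1 / Real.cosh ξ) ^ 2) ξ
      + r * ν ^ 2 * a ^ 2
          * deriv (deriv (deriv (fun ξ : ℝ => A * (1 / Real.cosh ξ) ^ 2))) ξ = 0 := by
  intro ξ
  have hD : (4 * ν ^ 2 * r + p) ≠ 0 := hpr.ne
  have hs2 : Real.sqrt (-1 / (4 * ν ^ 2 * r + p)) ^ 2 = -1 / (4 * ν ^ 2 * r + p) :=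
    Real.sq_sqrt (le_of_lt (div_pos_of_neg_of_neg (by norm_num) hpr))
  have hε2 : ε ^ 2 = 1 := by rcases hε with h | h <;> simp [h]
  have ha2 : a ^ 2 = ν ^ 2 * (-1 / (4 * ν ^ 2 * r + p)) := by
    rw [ha]; rw [show (-ε * ν * Real.sqrt (-1 / (4 * ν ^ 2 * r + p))) ^ 2
      = ε ^ 2 * ν ^ 2 * Real.sqrt (-1 / (4 * ν ^ 2 * r + p)) ^ 2 by ring, hε2, hs2]
    ring
  have key1 : (p + 4 * r * ν ^ 2) * a ^ 2 = -ν ^ 2 := by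
    rw [ha2, show p + 4 * r * ν ^ 2 = 4 * ν ^ 2 * r + p by ring]; field_simp
  have key2 : q * A = -12 * ν ^ 2 * a := by
    rw [ha, hA]; field_simp
  rw [d1 A, d2 A, d3 A]
  have hch := Real.cosh_sq ξ
  have hc := coshne ξ
  linear_combination (norm := (field_simp; ring))
    (-2 * A * Real.sinh ξ / Real.cosh ξ ^ 3) * key1
    + (2 * r * a * A * Real.sinh ξ / Real.cosh ξ ^ 5) * key2
    + (24 * r * ν ^ 2 * a ^ 2 * A * Real.sinh ξ / Real.cosh ξ ^ 5) * hch
end
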